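/- Maurey net size growth within the chaining: with δᵢ = δ/2ⁱ, r₂ = Kδ/L₂, and Nᵢ the product net from a (δᵢ/(L₁L₂))-net of B₂ᵏ(r₁) and a Maurey (δᵢ/L₂)-net of B₁ᵖ(r₂), we have log|Nᵢ| ≤ 4ⁱ·K²·log(2p+1) + k·(log(4L₁L₂r₁/δ) + i); hence if m ≥ K²·log(2p+1) + k·log(4L₁L₂r₁/δ) and i ≥ 1 with k·i ≤ k·log(4L₁L₂r₁/δ)·i, then log|Nᵢ| ≤ 2·4ⁱ·m. -/

import Mathlib

open scoped NNReal

noncomputable def coveringNumber {α : Type*} [PseudoMetricSpace α] (δ : ℝ) (T : Set α) : ℕ∞ :=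
  ⨅ (S : Finset α) (_ : ↑S ⊆ T ∧ ∀ x ∈ T, ∃ y ∈ S, dist x y ≤ δ), (S.card : ℕ∞)

def l1Ball (d : ℕ) (r : ℝ) : Set (EuclideanSpace ℝ (Fin d)) := {x | ∑ i, |x i| ≤ r}

open Finset Metric MeasureTheory
open scoped ENNReal

lemma coveringNumber_le_card {α : Type*} [PseudoMetricSpace α] {δ : ℝ} {T : Set α}
    (S : Finset α) (h : ↑S ⊆ T ∧ ∀ x ∈ T, ∃ y ∈ S, dist x y ≤ δ) :
    coveringNumber δ T ≤ (S.card : ℕ∞) := by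
  exact iInf₂_le S h


lemma exists_le_expectation {Ω : Type*} [Fintype Ω] (q g : Ω → ℝ) (hq : ∀ ω, 0 ≤ q ω)
    (hsum : ∑ ω, q ω = 1) : ∃ ω, g ω ≤ ∑ ω, q ω * g ω := by
  by_contra h
  push_neg at h
  set S := ∑ ω, q ω * g ω with hS
  have hterm : ∀ ω ∈ Finset.univ, (0:ℝ) ≤ q ω * (g ω - S) := fun ω _ =>
    mul_nonneg (hq ω) (le_of_lt (sub_pos.2 (h ω)))
  have hzero : ∑ ω, q ω * (g ω - S) = 0 := by
    simp only [mul_sub, Finset.sum_sub_distrib, ← Finset.sum_mul, hsum]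
    ring
  have hall : ∀ ω ∈ Finset.univ, q ω * (g ω - S) = 0 :=
    (Finset.sum_eq_zero_iff_of_nonneg hterm).1 hzero
  obtain ⟨ω, hω⟩ : ∃ ω, 0 < q ω := by
    by_contra hc
    push_neg at hc
    have : ∑ ω, q ω ≤ 0 := Finset.sum_nonpos (fun ω _ => hc ω)
    linarith [hsum]
  have := hall ω (Finset.mem_univ ω)
  have : g ω = S := by
    rcases mul_eq_zero.1 this with h' | h'
    · exact absurd h' (ne_of_gt hω)
    · linarith
  exact absurd (h ω) (by rw [this]; exact lt_irrefl S)

lemma maurey_induction {E : Type*} [NormedAddCommGroup E] [InnerProductSpace ℝ E]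
    {Ω : Type*} [Fintype Ω] (q : Ω → ℝ) (Z : Ω → E) (x : E)
    (hq : ∀ ω, 0 ≤ q ω) (hsum : ∑ ω, q ω = 1)
    (hmean : ∑ ω, q ω • Z ω = x) :
    ∀ s : ℕ, ∃ f : Fin s → Ω,
      ‖(∑ j, Z (f j)) - (s:ℝ) • x‖ ^ 2 ≤ s * (∑ ω, q ω * ‖Z ω - x‖ ^ 2) := by
  set A := ∑ ω, q ω * ‖Z ω - x‖ ^ 2 with hA
  intro s
  induction s with
  | zero => exact ⟨Fin.elim0, by simp⟩
  | succ s ih =>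
    obtain ⟨f, hf⟩ := ih
    set u := ∑ j, Z (f j) with hu
    -- expectation of g ω = ‖(u + Z ω) - (s+1)•x‖²
    have key : ∑ ω, q ω * ‖(u + Z ω) - ((s:ℝ)+1) • x‖ ^ 2
        = ‖u - (s:ℝ) • x‖ ^ 2 + A := by
      have expand : ∀ ω, ‖(u + Z ω) - ((s:ℝ)+1) • x‖ ^ 2
          = ‖u - (s:ℝ) • x‖ ^ 2 + 2 * inner ℝ (u - (s:ℝ) • x) (Z ω - x) + ‖Z ω - x‖ ^ 2 := by
        intro ω
        have : (u + Z ω) - ((s:ℝ)+1) • x = (u - (s:ℝ) • x) + (Z ω - x) := by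
          rw [add_smul, one_smul]; abel
        rw [this, norm_add_sq_real]
      simp only [expand, mul_add, Finset.sum_add_distrib]
      have h1 : ∑ ω, q ω * ‖u - (s:ℝ) • x‖ ^ 2 = ‖u - (s:ℝ) • x‖ ^ 2 := by
        rw [← Finset.sum_mul, hsum, one_mul]
      have h2 : ∑ ω, q ω * (2 * inner ℝ (u - (s:ℝ) • x) (Z ω - x)) = 0 := by
        have : ∑ ω, q ω • (Z ω - x) = 0 := by
          simp only [smul_sub, Finset.sum_sub_distrib, hmean, ← Finset.sum_smul, hsum, one_smul,
            sub_self]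
        calc ∑ ω, q ω * (2 * inner ℝ (u - (s:ℝ) • x) (Z ω - x))
            = 2 * inner ℝ (u - (s:ℝ) • x) (∑ ω, q ω • (Z ω - x)) := by
              rw [inner_sum, Finset.mul_sum]
              exact Finset.sum_congr rfl fun ω _ => by
                rw [real_inner_smul_right]; ring
          _ = 0 := by rw [this, inner_zero_right]; ring
      rw [h1, h2, hA]; ring
    obtain ⟨ω, hω⟩ := exists_le_expectation q
      (fun ω => ‖(u + Z ω) - ((s:ℝ)+1) • x‖ ^ 2) hq hsum
    set g : Fin (s+1) → Ω := Fin.snoc f ω with hg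
    refine ⟨g, ?_⟩
    have hsum' : ∑ j, Z (g j) = u + Z ω := by
      rw [Fin.sum_univ_castSucc]
      simp [hg, hu]
    have hApos : 0 ≤ A := Finset.sum_nonneg fun ω _ =>
      mul_nonneg (hq ω) (sq_nonneg _)
    rw [hsum']
    push_cast
    calc ‖(u + Z ω) - ((s:ℝ)+1) • x‖ ^ 2 ≤ ‖u - (s:ℝ) • x‖ ^ 2 + A := by
          rw [← key]; exact hω
      _ ≤ (s:ℝ) * A + A := by linarith
      _ = ((s:ℝ)+1) * A := by ring

noncomputable def mZ (p : ℕ) (r : ℝ) : Option (Bool × Fin p) → EuclideanSpace ℝ (Fin p)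
  | none => 0
  | some (b, j) => EuclideanSpace.single j (if b then r else -r)

lemma maurey_net (p : ℕ) {r η : ℝ} (hr : 0 < r) (hη : 0 < η) (s : ℕ) (hs : 1 ≤ s)
    (hcond : r ^ 2 ≤ ((s:ℝ) + 1) * η ^ 2) :
    ∃ S : Finset (EuclideanSpace ℝ (Fin p)), ↑S ⊆ l1Ball p r ∧
      (∀ x ∈ l1Ball p r, ∃ y ∈ S, dist x y ≤ η) ∧ S.card ≤ (2 * p + 1) ^ s := by
  classical
  set Ω := Option (Bool × Fin p)
  set Z := mZ p r with hZ
  set F : (Fin s → Ω) → EuclideanSpace ℝ (Fin p) :=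
    fun f => ((s:ℝ))⁻¹ • ∑ j, Z (f j) with hF
  set S : Finset (EuclideanSpace ℝ (Fin p)) := Finset.image F Finset.univ with hS
  have hspos : (0:ℝ) < s := by exact_mod_cast hs
  have hZl1 : ∀ ω, ∑ i, |Z ω i| ≤ r := by
    intro ω
    match ω with
    | none => simp [hZ, mZ]; positivity
    | some (b, j) =>
      simp only [hZ, mZ, EuclideanSpace.single_apply, apply_ite abs, abs_zero,
        Finset.sum_ite_eq', Finset.mem_univ, if_true]
      cases b <;> simp [abs_of_pos hr, abs_neg, le_refl]
  have hZnorm : ∀ ω, ‖Z ω‖ ^ 2 ≤ r ^ 2 := by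
    intro ω
    match ω with
    | none => simp [hZ, mZ]; positivity
    | some (b, j) =>
      simp only [hZ, mZ, EuclideanSpace.norm_single]
      cases b <;> simp [abs_of_pos hr, sq_abs, le_refl]
  -- S ⊆ l1Ball
  have hsub : ↑S ⊆ l1Ball p r := by
    intro y hy
    simp only [hS, Finset.coe_image, Set.mem_image, Finset.mem_coe, Finset.mem_univ] at hy
    obtain ⟨f, _, rfl⟩ := hy
    show ∑ i, |F f i| ≤ r
    have : ∀ i, F f i = (s:ℝ)⁻¹ * ∑ j, Z (f j) i := by
      intro i
      have h1 : (∑ j, Z (f j)) i = ∑ j, Z (f j) i := by rw [WithLp.ofLp_sum, Finset.sum_apply]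
      simp only [hF, PiLp.smul_apply, smul_eq_mul, h1]
    calc ∑ i, |F f i| = ∑ i, (s:ℝ)⁻¹ * |∑ j, Z (f j) i| := by
          refine Finset.sum_congr rfl fun i _ => ?_
          rw [this i, abs_mul, abs_of_nonneg (by positivity)]
      _ ≤ ∑ i, (s:ℝ)⁻¹ * ∑ j, |Z (f j) i| := by
          refine Finset.sum_le_sum fun i _ => ?_
          exact mul_le_mul_of_nonneg_left (Finset.abs_sum_le_sum_abs _ _) (by positivity)
      _ = (s:ℝ)⁻¹ * ∑ j, ∑ i, |Z (f j) i| := by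
          rw [← Finset.mul_sum, Finset.sum_comm]
      _ ≤ (s:ℝ)⁻¹ * ∑ j : Fin s, r := by
          refine mul_le_mul_of_nonneg_left (Finset.sum_le_sum fun j _ => hZl1 _) (by positivity)
      _ = r := by
          rw [Finset.sum_const, Finset.card_univ, Fintype.card_fin, nsmul_eq_mul]
          field_simp
  refine ⟨S, hsub, ?_, ?_⟩
  · -- net property
    intro x hx
    have hx1 : ∑ i, |x i| ≤ r := hx
    rcases le_total ‖x‖ η with hcase | hcase
    · -- use 0 = F (const none)
      refine ⟨F (fun _ => none), Finset.mem_image_of_mem F (Finset.mem_univ _), ?_⟩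
      have h0 : F (fun _ => none) = 0 := by simp [hF, hZ, mZ]
      rw [h0, dist_zero_right]; exact hcase
    · -- Maurey sampling
      set q : Ω → ℝ := fun ω => match ω with
        | none => 1 - (∑ i, |x i|) / r
        | some (true, j) => max (x j) 0 / r
        | some (false, j) => max (-x j) 0 / r with hq
      have hqn : q none = 1 - (∑ i, |x i|) / r := rfl
      have hqt : ∀ j, q (some (true, j)) = max (x j) 0 / r := fun _ => rfl
      have hqf : ∀ j, q (some (false, j)) = max (-x j) 0 / r := fun _ => rfl
      have hqpos : ∀ ω, 0 ≤ q ω := by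
        intro ω
        match ω with
        | none =>
          rw [hqn]
          have : (∑ i, |x i|) / r ≤ 1 := by
            rw [div_le_one hr]; exact hx1
          linarith
        | some (true, j) => rw [hqt]; positivity
        | some (false, j) => rw [hqf]; positivity
      have habs : ∀ a : ℝ, max a 0 + max (-a) 0 = |a| := by
        intro a; rcases le_total a 0 with h | h
        · rw [abs_of_nonpos h, max_eq_right h, max_eq_left (by linarith)]; ring
        · rw [abs_of_nonneg h, max_eq_left h, max_eq_right (by linarith)]; ring
      have hqsum : ∑ ω, q ω = 1 := by
        rw [Fintype.sum_option, Fintype.sum_prod_type_right]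
        simp only [Fintype.sum_bool, hqt, hqf, hqn]
        have h : ∑ j, ((max (x j) 0) / r + (max (-x j) 0) / r) = (∑ i, |x i|) / r := by
          rw [Finset.sum_div]
          refine Finset.sum_congr rfl fun j _ => ?_
          rw [← add_div, habs]
        rw [h]; ring
      have hmean : ∑ ω, q ω • Z ω = x := by
        ext i
        have hsa : (∑ ω, q ω • Z ω) i = ∑ ω, q ω * Z ω i := by
          rw [WithLp.ofLp_sum, Finset.sum_apply]
          exact Finset.sum_congr rfl fun ω _ => rfl
        have hZt : ∀ j : Fin p, Z (some (true, j)) i = EuclideanSpace.single j r i := fun _ => rfl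
        have hZf : ∀ j : Fin p, Z (some (false, j)) i = EuclideanSpace.single j (-r) i :=
          fun _ => rfl
        have hZn : Z none i = 0 := rfl
        have hterm : ∀ j : Fin p,
            (max (x j) 0 / r) * (EuclideanSpace.single j r i)
              + (max (-x j) 0 / r) * (EuclideanSpace.single j (-r) i)
            = if i = j then x j else 0 := by
          intro j
          simp only [EuclideanSpace.single_apply]
          by_cases h : i = j
          · simp only [h, if_pos rfl]
            field_simp
            rcases le_total (x j) 0 with hc | hc
            · rw [max_eq_right hc, max_eq_left (by linarith)]; simp only [↓reduceIte]; ring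
            · rw [max_eq_left hc, max_eq_right (by linarith)]; simp only [↓reduceIte]; ring
          · simp [h]
        rw [hsa, Fintype.sum_option, Fintype.sum_prod_type_right]
        calc q none * Z none i + ∑ j, ∑ b : Bool, q (some (b, j)) * Z (some (b, j)) i
            = ∑ j, (if i = j then x j else 0) := by
              rw [hZn, mul_zero, zero_add]
              refine Finset.sum_congr rfl fun j _ => ?_
              rw [Fintype.sum_bool, hqt, hqf, hZt, hZf, hterm j]
          _ = x i := by simp
      obtain ⟨f, hf⟩ := maurey_induction q Z x hqpos hqsum hmean s
      refine ⟨F f, Finset.mem_image_of_mem F (Finset.mem_univ _), ?_⟩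
      have hA : ∑ ω, q ω * ‖Z ω - x‖ ^ 2 ≤ r ^ 2 - ‖x‖ ^ 2 := by
        have expand : ∀ ω, ‖Z ω - x‖ ^ 2 = ‖Z ω‖ ^ 2 - 2 * inner ℝ (Z ω) x + ‖x‖ ^ 2 :=
          fun ω => norm_sub_sq_real _ _
        have h1 : ∑ ω, q ω * ‖Z ω‖ ^ 2 ≤ r ^ 2 := by
          calc ∑ ω, q ω * ‖Z ω‖ ^ 2 ≤ ∑ ω, q ω * r ^ 2 :=
                Finset.sum_le_sum fun ω _ => mul_le_mul_of_nonneg_left (hZnorm ω) (hqpos ω)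
            _ = r ^ 2 := by rw [← Finset.sum_mul, hqsum, one_mul]
        have h2 : ∑ ω, q ω * inner ℝ (Z ω) x = ‖x‖ ^ 2 := by
          have : ∑ ω, q ω * inner ℝ (Z ω) x = inner ℝ (∑ ω, q ω • Z ω) x := by
            rw [sum_inner]
            exact Finset.sum_congr rfl fun ω _ => (real_inner_smul_left _ _ _).symm
          rw [this, hmean, real_inner_self_eq_norm_sq]
        calc ∑ ω, q ω * ‖Z ω - x‖ ^ 2
            = ∑ ω, (q ω * ‖Z ω‖ ^ 2 - 2 * (q ω * inner ℝ (Z ω) x) + q ω * ‖x‖ ^ 2) := by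
              refine Finset.sum_congr rfl fun ω _ => ?_
              rw [expand ω]; ring
          _ = (∑ ω, q ω * ‖Z ω‖ ^ 2) - 2 * (∑ ω, q ω * inner ℝ (Z ω) x)
              + (∑ ω, q ω) * ‖x‖ ^ 2 := by
              rw [Finset.sum_add_distrib, Finset.sum_sub_distrib, ← Finset.mul_sum,
                Finset.sum_mul]
          _ ≤ r ^ 2 - 2 * ‖x‖ ^ 2 + 1 * ‖x‖ ^ 2 := by rw [h2, hqsum]; linarith
          _ = r ^ 2 - ‖x‖ ^ 2 := by ring
      have hdist : dist x (F f) ^ 2 ≤ η ^ 2 := by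
        have h1 : dist x (F f) = (s:ℝ)⁻¹ * ‖(∑ j, Z (f j)) - (s:ℝ) • x‖ := by
          rw [dist_eq_norm]
          have : x - F f = -((s:ℝ)⁻¹ • ((∑ j, Z (f j)) - (s:ℝ) • x)) := by
            simp only [hF, smul_sub, smul_smul]
            rw [inv_mul_cancel₀ (ne_of_gt hspos), one_smul]
            abel
          rw [this, norm_neg, norm_smul]
          simp [abs_of_pos (inv_pos.2 hspos)]
        rw [h1, mul_pow]
        have h2 : ‖(∑ j, Z (f j)) - (s:ℝ) • x‖ ^ 2 ≤ s * (r ^ 2 - ‖x‖ ^ 2) :=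
          le_trans hf (mul_le_mul_of_nonneg_left hA hspos.le)
        have h3 : r ^ 2 - ‖x‖ ^ 2 ≤ (s:ℝ) * η ^ 2 := by nlinarith
        calc ((s:ℝ)⁻¹) ^ 2 * ‖(∑ j, Z (f j)) - (s:ℝ) • x‖ ^ 2
            ≤ ((s:ℝ)⁻¹) ^ 2 * ((s:ℝ) * ((s:ℝ) * η ^ 2)) := by
              refine mul_le_mul_of_nonneg_left ?_ (by positivity)
              calc ‖(∑ j, Z (f j)) - (s:ℝ) • x‖ ^ 2 ≤ (s:ℝ) * (r ^ 2 - ‖x‖ ^ 2) := h2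
                _ ≤ (s:ℝ) * ((s:ℝ) * η ^ 2) := mul_le_mul_of_nonneg_left h3 hspos.le
          _ = η ^ 2 := by field_simp
      nlinarith [hdist, dist_nonneg (x := x) (y := F f), hη.le]
  · -- cardinality
    calc S.card ≤ (Finset.univ : Finset (Fin s → Ω)).card := Finset.card_image_le
      _ = (2 * p + 1) ^ s := by
          rw [Finset.card_univ]
          show Fintype.card (Fin s → Option (Bool × Fin p)) = (2 * p + 1) ^ s
          rw [Fintype.card_fun, Fintype.card_fin]
          congr 1
          simp only [Fintype.card_option, Fintype.card_prod, Fintype.card_bool, Fintype.card_fin]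
          try omega

lemma sep_card_bound (k : ℕ) {r ε : ℝ} (hr : 0 < r) (hε : 0 < ε)
    (P : Finset (EuclideanSpace ℝ (Fin k)))
    (hsub : ↑P ⊆ closedBall (0 : EuclideanSpace ℝ (Fin k)) r)
    (hsep : (↑P : Set (EuclideanSpace ℝ (Fin k))).Pairwise (fun a b => ε < dist a b)) :
    (P.card : ℝ) ≤ (1 + 2 * r / ε) ^ k := by
  classical
  set μ : Measure (EuclideanSpace ℝ (Fin k)) := volume with hμ
  set C : ℝ≥0∞ := μ (ball 0 1) with hC
  have hC0 : C ≠ 0 := by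
    simp only [hC]
    exact (measure_ball_pos μ 0 one_pos).ne'
  have hCtop : C ≠ ⊤ := by
    simp only [hC]
    exact (measure_ball_lt_top).ne
  have hfr : Module.finrank ℝ (EuclideanSpace ℝ (Fin k)) = k := finrank_euclideanSpace_fin
  have hballP : ∀ x : EuclideanSpace ℝ (Fin k), μ (closedBall x (ε/2)) = ENNReal.ofReal ((ε/2)^k) * C := by
    intro x
    rw [Measure.addHaar_closedBall μ x (by positivity), hfr]
  have hdisj : (↑P : Set (EuclideanSpace ℝ (Fin k))).PairwiseDisjoint (fun x => closedBall x (ε/2)) := by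
    intro a ha b hb hab
    have := hsep ha hb hab
    exact closedBall_disjoint_closedBall (by linarith)
  have hsum : μ (⋃ x ∈ P, closedBall x (ε/2)) = ∑ x ∈ P, μ (closedBall x (ε/2)) :=
    measure_biUnion_finset hdisj fun b _ => measurableSet_closedBall
  have hsubset : (⋃ x ∈ P, closedBall x (ε/2)) ⊆ closedBall (0:EuclideanSpace ℝ (Fin k)) (r + ε/2) := by
    intro z hz
    simp only [Set.mem_iUnion] at hz
    obtain ⟨x, hx, hzx⟩ := hz
    have h1 : dist x 0 ≤ r := mem_closedBall.1 (hsub hx)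
    have h2 : dist z x ≤ ε/2 := mem_closedBall.1 hzx
    exact mem_closedBall.2 (le_trans (dist_triangle z x 0) (by linarith))
  have key : (P.card : ℝ≥0∞) * (ENNReal.ofReal ((ε/2)^k) * C)
      ≤ ENNReal.ofReal ((r + ε/2)^k) * C := by
    calc (P.card : ℝ≥0∞) * (ENNReal.ofReal ((ε/2)^k) * C)
        = ∑ x ∈ P, μ (closedBall x (ε/2)) := by
          rw [Finset.sum_congr rfl fun x _ => hballP x, Finset.sum_const, nsmul_eq_mul]
      _ = μ (⋃ x ∈ P, closedBall x (ε/2)) := hsum.symm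
      _ ≤ μ (closedBall (0:EuclideanSpace ℝ (Fin k)) (r + ε/2)) := measure_mono hsubset
      _ = ENNReal.ofReal ((r + ε/2)^k) * C := by
          rw [Measure.addHaar_closedBall μ 0 (by positivity), hfr]
  have key2 : (P.card : ℝ≥0∞) * ENNReal.ofReal ((ε/2)^k) ≤ ENNReal.ofReal ((r + ε/2)^k) := by
    rw [← mul_assoc] at key
    exact (ENNReal.mul_le_mul_iff_left hC0 hCtop).1 key
  have key3 : (P.card : ℝ) * ((ε/2)^k) ≤ (r + ε/2)^k := by
    have h1 : ENNReal.ofReal ((P.card : ℝ) * ((ε/2)^k)) ≤ ENNReal.ofReal ((r + ε/2)^k) := by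
      rw [ENNReal.ofReal_mul (by positivity)]
      rw [ENNReal.ofReal_natCast]
      exact key2
    exact (ENNReal.ofReal_le_ofReal_iff (by positivity)).1 h1
  have hpow : (0:ℝ) < (ε/2)^k := by positivity
  rw [← le_div_iff₀ hpow] at key3
  calc (P.card : ℝ) ≤ (r + ε/2)^k / (ε/2)^k := key3
    _ = ((r + ε/2) / (ε/2))^k := by rw [← div_pow]
    _ = (1 + 2 * r / ε)^k := by
        congr 1
        field_simp
        ring

lemma euclid_net (k : ℕ) {r ε : ℝ} (hr : 0 < r) (hε : 0 < ε) :
    ∃ S : Finset (EuclideanSpace ℝ (Fin k)),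
      ↑S ⊆ closedBall (0 : EuclideanSpace ℝ (Fin k)) r ∧
      (∀ x ∈ closedBall (0 : EuclideanSpace ℝ (Fin k)) r, ∃ y ∈ S, dist x y ≤ ε) ∧
      (S.card : ℝ) ≤ (1 + 2 * r / ε) ^ k := by
  classical
  set Sep : Finset (EuclideanSpace ℝ (Fin k)) → Prop := fun P =>
    ↑P ⊆ closedBall (0:EuclideanSpace ℝ (Fin k)) r ∧
      (↑P : Set (EuclideanSpace ℝ (Fin k))).Pairwise (fun a b => ε < dist a b) with hSep
  set cards : Set ℕ := {n | ∃ P, Sep P ∧ P.card = n} with hcards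
  have hne : cards.Nonempty := ⟨0, ∅, ⟨by simp, by simp⟩, rfl⟩
  have hbdd : BddAbove cards := by
    refine ⟨⌈(1 + 2 * r / ε) ^ k⌉₊, ?_⟩
    rintro n ⟨P, ⟨h1, h2⟩, rfl⟩
    have hb := sep_card_bound k hr hε P h1 h2
    exact_mod_cast hb.trans (Nat.le_ceil _)
  obtain ⟨P, ⟨hP1, hP2⟩, hPcard⟩ := Nat.sSup_mem hne hbdd
  refine ⟨P, hP1, ?_, sep_card_bound k hr hε P hP1 hP2⟩
  intro x hx
  by_contra hcon
  push_neg at hcon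
  have hcon' : ∀ y ∈ P, ε < dist x y := fun y hy => hcon y hy
  have hxP : x ∉ P := by
    intro hxP
    have := hcon' x hxP
    rw [dist_self] at this
    linarith
  have hSepIns : Sep (insert x P) := by
    constructor
    · rw [Finset.coe_insert, Set.insert_subset_iff]
      exact ⟨hx, hP1⟩
    · rw [Finset.coe_insert]
      haveI : Std.Symm (fun a b : EuclideanSpace ℝ (Fin k) => ε < dist a b) := ⟨fun a b h => by rwa [dist_comm] at h⟩
      rw [Set.pairwise_insert_of_symm]
      exact ⟨hP2, fun b hb _ => hcon' b hb⟩
  have hmem : P.card + 1 ∈ cards := ⟨insert x P, hSepIns, by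
    rw [Finset.card_insert_of_notMem hxP]⟩
  have := le_csSup hbdd hmem
  omega

set_option maxHeartbeats 2000000 in
/-- Net size growth in the chaining: with `δᵢ = δ/2ⁱ`, `r₂ = Kδ/L₂`, and `Nᵢ` the product of a
`(δᵢ/(L₁L₂))`-net of `B₂ᵏ(r₁)` and a Maurey `(δᵢ/L₂)`-net of `B₁ᵖ(r₂)`,
`log|Nᵢ| ≤ 4ⁱK²log(2p+1) + k(log(4L₁L₂r₁/δ) + i)`; hence if
`m ≥ K²log(2p+1) + k·log(4L₁L₂r₁/δ)` and `i ≥ 1`, then `log|Nᵢ| ≤ 2·4ⁱ·m`. -/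
theorem maurey_net_growth {k p : ℕ} (L₁ L₂ r₁ δ K m : ℝ)
    (hL₁ : 0 < L₁) (hL₂ : 0 < L₂) (hr₁ : 0 < r₁) (hδ : 0 < δ) (hK : 1 ≤ K)
    (hδr : δ ≤ L₁ * L₂ * r₁) (r₂ : ℝ) (hr₂ : r₂ = K * δ / L₂)
    (hm : K ^ 2 * Real.log (2 * p + 1) + k * Real.log (4 * L₁ * L₂ * r₁ / δ) ≤ m)
    (i : ℕ) (hi : 1 ≤ i)
    (N : ℕ∞)
    (hN : N = coveringNumber (δ / 2 ^ i / (L₁ * L₂))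
          (Metric.closedBall (0 : EuclideanSpace ℝ (Fin k)) r₁) *
        coveringNumber (δ / 2 ^ i / L₂) (l1Ball p r₂)) :
    N ≠ ⊤ ∧
      Real.log N.toNat ≤
        4 ^ i * K ^ 2 * Real.log (2 * p + 1) +
          k * (Real.log (4 * L₁ * L₂ * r₁ / δ) + i) ∧
      Real.log N.toNat ≤ 2 * 4 ^ i * m := by
  classical
  set ε₁ : ℝ := δ / 2 ^ i / (L₁ * L₂) with hε₁
  set η : ℝ := δ / 2 ^ i / L₂ with hη
  have h2ipos : (0:ℝ) < 2 ^ i := by positivity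
  have h4ipos : (0:ℝ) < 4 ^ i := by positivity
  have hε₁pos : 0 < ε₁ := by rw [hε₁]; positivity
  have hηpos : 0 < η := by rw [hη]; positivity
  have hr₂pos : 0 < r₂ := by rw [hr₂]; positivity
  have h4eq : ((2:ℝ) ^ i) ^ 2 = 4 ^ i := by
    rw [← pow_mul, mul_comm, pow_mul]; norm_num
  have h2ige : (2:ℝ) ≤ 2 ^ i := by
    calc (2:ℝ) = 2 ^ 1 := (pow_one 2).symm
      _ ≤ 2 ^ i := pow_le_pow_right₀ (by norm_num) hi
  -- Maurey parameters
  set t : ℝ := 4 ^ i * K ^ 2 with ht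
  have ht4 : (4:ℝ) ≤ t := by
    have h1 : (4:ℝ) ≤ 4 ^ i := by
      calc (4:ℝ) = 4 ^ 1 := (pow_one 4).symm
        _ ≤ 4 ^ i := pow_le_pow_right₀ (by norm_num) hi
    nlinarith
  have ht0 : (0:ℝ) ≤ t := by linarith
  set s : ℕ := ⌈t⌉₊ - 1 with hs
  have hceil : 3 < ⌈t⌉₊ := Nat.lt_ceil.2 (by push_cast; linarith)
  have hs1 : 1 ≤ s := by omega
  have hscast : ((s:ℕ):ℝ) + 1 = (⌈t⌉₊ : ℝ) := by
    rw [hs]; push_cast [Nat.cast_sub (by omega : 1 ≤ ⌈t⌉₊)]; ring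
  have hsle : (s:ℝ) ≤ t := by
    have := Nat.ceil_lt_add_one ht0
    have h2 : (⌈t⌉₊:ℝ) < t + 1 := this
    linarith [hscast]
  have hsge : t ≤ (s:ℝ) + 1 := by rw [hscast]; exact Nat.le_ceil t
  have htη : t * η ^ 2 = r₂ ^ 2 := by
    rw [ht, hη, hr₂]
    field_simp
    rw [← h4eq]
  have hcond : r₂ ^ 2 ≤ ((s:ℝ) + 1) * η ^ 2 := by
    rw [← htη]
    exact mul_le_mul_of_nonneg_right hsge (sq_nonneg η)
  obtain ⟨S₂, hS₂sub, hS₂net, hS₂card⟩ := maurey_net p hr₂pos hηpos s hs1 hcond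
  obtain ⟨S₁, hS₁sub, hS₁net, hS₁card⟩ := euclid_net k hr₁ hε₁pos
  set n₁ := S₁.card with hn₁
  set n₂ := S₂.card with hn₂
  have hcov₁ : coveringNumber ε₁ (Metric.closedBall (0 : EuclideanSpace ℝ (Fin k)) r₁)
      ≤ (n₁ : ℕ∞) := coveringNumber_le_card S₁ ⟨hS₁sub, hS₁net⟩
  have hcov₂ : coveringNumber η (l1Ball p r₂) ≤ (n₂ : ℕ∞) :=
    coveringNumber_le_card S₂ ⟨hS₂sub, hS₂net⟩
  have hNle : N ≤ ((n₁ * n₂ : ℕ) : ℕ∞) := by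
    rw [hN, Nat.cast_mul]
    exact mul_le_mul' hcov₁ hcov₂
  have hNtop : N ≠ ⊤ := ne_top_of_le_ne_top (WithTop.coe_ne_top) hNle
  have hNtoNat : N.toNat ≤ n₁ * n₂ := by
    have := ENat.toNat_le_toNat hNle (WithTop.coe_ne_top)
    simpa using this
  -- nets nonempty
  have hn₁pos : 1 ≤ n₁ := by
    obtain ⟨y, hy, -⟩ := hS₁net 0 (Metric.mem_closedBall_self hr₁.le)
    exact Finset.card_pos.2 ⟨y, hy⟩
  have hn₂pos : 1 ≤ n₂ := by
    obtain ⟨y, hy, -⟩ := hS₂net 0 (by simp [l1Ball, hr₂pos.le])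
    exact Finset.card_pos.2 ⟨y, hy⟩
  -- log bound
  have hlogN : Real.log N.toNat ≤ Real.log n₁ + Real.log n₂ := by
    have hmul1 : 1 ≤ n₁ * n₂ := Nat.one_le_iff_ne_zero.2 (by positivity)
    have hstep : Real.log N.toNat ≤ Real.log (n₁ * n₂ : ℕ) := by
      rcases Nat.eq_zero_or_pos N.toNat with h | h
      · rw [h]
        simp only [Nat.cast_zero, Real.log_zero]
        exact Real.log_nonneg (by exact_mod_cast hmul1)
      · exact Real.log_le_log (by exact_mod_cast h) (by exact_mod_cast hNtoNat)
    calc Real.log N.toNat ≤ Real.log (n₁ * n₂ : ℕ) := hstep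
      _ = Real.log n₁ + Real.log n₂ := by
          push_cast
          rw [Real.log_mul (by positivity) (by positivity)]
  set L : ℝ := Real.log (2 * p + 1) with hLdef
  set R : ℝ := Real.log (4 * L₁ * L₂ * r₁ / δ) with hRdef
  have hLpos : 0 ≤ L := Real.log_nonneg (by have := Nat.cast_nonneg (α := ℝ) p; linarith)
  have hR1 : 1 ≤ R := by
    rw [hRdef, Real.le_log_iff_exp_le (by positivity)]
    calc Real.exp 1 ≤ 2.7182818286 := Real.exp_one_lt_d9.le
      _ ≤ 4 := by norm_num
      _ ≤ 4 * L₁ * L₂ * r₁ / δ := by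
          rw [le_div_iff₀ hδ]
          nlinarith
  -- bound log n₂
  have hlog₂ : Real.log n₂ ≤ t * L := by
    have h1 : Real.log n₂ ≤ Real.log ((2 * p + 1 : ℕ) ^ s) := by
      apply Real.log_le_log (by exact_mod_cast hn₂pos)
      exact_mod_cast hS₂card
    calc Real.log n₂ ≤ Real.log ((2 * p + 1 : ℕ) ^ s) := h1
      _ = (s : ℝ) * L := by
          rw [Real.log_pow, hLdef]; push_cast; ring_nf
      _ ≤ t * L := mul_le_mul_of_nonneg_right hsle hLpos
  -- bound log n₁
  have hB₁ : (1 : ℝ) + 2 * r₁ / ε₁ ≤ 4 * L₁ * L₂ * r₁ / δ * 2 ^ i := by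
    have hx : (2:ℝ) ≤ L₁ * L₂ * r₁ * 2 ^ i / δ := by
      rw [le_div_iff₀ hδ]
      have hprod := mul_le_mul_of_nonneg_left h2ige
        (le_of_lt (mul_pos (mul_pos hL₁ hL₂) hr₁))
      linarith
    have he : 2 * r₁ / ε₁ = 2 * (L₁ * L₂ * r₁ * 2 ^ i / δ) := by
      rw [hε₁]; field_simp
    have he2 : 4 * L₁ * L₂ * r₁ / δ * 2 ^ i = 4 * (L₁ * L₂ * r₁ * 2 ^ i / δ) := by
      field_simp
    rw [he, he2]
    linarith
  have hlog₁ : Real.log n₁ ≤ k * (R + i) := by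
    have hbase : (0:ℝ) ≤ 1 + 2 * r₁ / ε₁ := by positivity
    have h1 : (n₁ : ℝ) ≤ (4 * L₁ * L₂ * r₁ / δ * 2 ^ i) ^ k :=
      le_trans hS₁card (pow_le_pow_left₀ hbase hB₁ k)
    have h2 : Real.log n₁ ≤ Real.log ((4 * L₁ * L₂ * r₁ / δ * 2 ^ i) ^ k) :=
      Real.log_le_log (by exact_mod_cast hn₁pos) h1
    have h3 : Real.log ((4 * L₁ * L₂ * r₁ / δ * 2 ^ i) ^ k)
        = k * (R + i * Real.log 2) := by
      rw [Real.log_pow, Real.log_mul (by positivity) (by positivity), hRdef,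
        Real.log_pow]
      try ring
    have hlog2 : Real.log 2 ≤ 1 := by
      calc Real.log 2 ≤ 0.6931471808 := Real.log_two_lt_d9.le
        _ ≤ 1 := by norm_num
    have h4 : (k:ℝ) * (R + i * Real.log 2) ≤ k * (R + i) := by
      apply mul_le_mul_of_nonneg_left _ (Nat.cast_nonneg k)
      have : (i:ℝ) * Real.log 2 ≤ i := by
        nlinarith [Real.log_nonneg (by norm_num : (1:ℝ) ≤ 2), (Nat.cast_nonneg i : (0:ℝ) ≤ i)]
      linarith
    calc Real.log n₁ ≤ Real.log ((4 * L₁ * L₂ * r₁ / δ * 2 ^ i) ^ k) := h2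
      _ = k * (R + i * Real.log 2) := h3
      _ ≤ k * (R + i) := h4
  have claim2 : Real.log N.toNat ≤ 4 ^ i * K ^ 2 * L + k * (R + i) := by
    calc Real.log N.toNat ≤ Real.log n₁ + Real.log n₂ := hlogN
      _ ≤ k * (R + i) + t * L := add_le_add hlog₁ hlog₂
      _ = 4 ^ i * K ^ 2 * L + k * (R + i) := by rw [ht]; ring
  refine ⟨hNtop, claim2, ?_⟩
  -- arithmetic for claim 3
  have hi4 : (i:ℝ) ≤ 4 ^ i := by
    calc (i:ℝ) ≤ 2 ^ i := by exact_mod_cast (Nat.lt_two_pow_self (n := i)).le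
      _ ≤ 4 ^ i := by
        apply pow_le_pow_left₀ (by norm_num) (by norm_num)
  have h4ige1 : (1:ℝ) ≤ 4 ^ i := one_le_pow₀ (by norm_num)
  have hkR : (0:ℝ) ≤ (k:ℝ) := Nat.cast_nonneg k
  have hK2L : (0:ℝ) ≤ K ^ 2 * L := mul_nonneg (sq_nonneg K) hLpos
  have hRpos : (0:ℝ) ≤ R := le_trans zero_le_one hR1
  have harith : 4 ^ i * K ^ 2 * L + k * (R + i) ≤ 2 * 4 ^ i * (K ^ 2 * L + k * R) := by
    have hiR : (i:ℝ) ≤ i * R := by nlinarith [Nat.cast_nonneg (α := ℝ) i]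
    have h1 : (k:ℝ) * (R + i) ≤ 2 * 4 ^ i * (k * R) := by
      have h14 : (1:ℝ) + i ≤ 2 * 4 ^ i := by linarith
      calc (k:ℝ) * (R + i) ≤ k * (R + i * R) := by
            apply mul_le_mul_of_nonneg_left _ hkR
            linarith
        _ = k * R * (1 + i) := by ring
        _ ≤ k * R * (2 * 4 ^ i) := by
            apply mul_le_mul_of_nonneg_left h14 (mul_nonneg hkR hRpos)
        _ = 2 * 4 ^ i * (k * R) := by ring
    have h2 : (0:ℝ) ≤ 4 ^ i * K ^ 2 * L :=
      mul_nonneg (mul_nonneg h4ipos.le (sq_nonneg K)) hLpos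
    nlinarith [h1, h2]
  have hmm : (0:ℝ) ≤ 2 * 4 ^ i := by positivity
  calc Real.log N.toNat ≤ 4 ^ i * K ^ 2 * L + k * (R + i) := claim2
    _ ≤ 2 * 4 ^ i * (K ^ 2 * L + k * R) := harith
    _ ≤ 2 * 4 ^ i * m := mul_le_mul_of_nonneg_left hm hmm
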